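/- For the LUE (Laguerre Unitary Ensemble) with parameter α, the one-point correlator ⟨tr X^ℓ⟩ := (1/Z_N) ∫_{H_N^+} tr(X^ℓ) det(X)^α exp(-tr X) dX equals A_ℓ(N, N+α) for all ℓ ≥ 1, where A_ℓ(N,M) := (1/ℓ) ∑_{j=0}^{ℓ-1} (-1)^j (N-j)_ℓ (M-j)_ℓ / (j!(ℓ-1-j)!). Equivalently, in terms of monic generalized Laguerre polynomials: ∑_{n=0}^{N-1} (1/h_n) ∫_0^∞ x^{ℓ+α} e^{-x} (π_n^{(α)}(x))² dx = A_ℓ(N, N+α), where h_n = n! Γ(α+n+1). -/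

import Mathlib

open Finset MeasureTheory

/-- Rising factorial (Pochhammer symbol) `(x)_n = x(x+1)⋯(x+n-1)`. -/
noncomputable def poch (x : ℝ) (n : ℕ) : ℝ := (ascPochhammer ℝ n).eval x

/-- The LUE coefficients `A_ℓ(N,M)`. -/
noncomputable def A (N M : ℝ) : ℕ → ℝ
  | 0 => N
  | (ℓ + 1) => (1 / ((ℓ : ℝ) + 1)) * ∑ j ∈ range (ℓ + 1),
      (-1 : ℝ) ^ j * poch (N - j) (ℓ + 1) * poch (M - j) (ℓ + 1) /
        ((j.factorial : ℝ) * ((ℓ - j).factorial : ℝ))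

/-- Monic generalized Laguerre polynomial
`π_n^{(α)}(x) = ∑_{j=0}^n (-1)^{n-j} (n-j+1)_j (j+1+α)_{n-j} x^j / j!`. -/
noncomputable def laguerreMonic (α : ℝ) (n : ℕ) (x : ℝ) : ℝ :=
  ∑ j ∈ range (n + 1),
    (-1 : ℝ) ^ (n - j) * poch ((n : ℝ) - j + 1) j * poch ((j : ℝ) + 1 + α) (n - j) * x ^ j /
      (j.factorial : ℝ)

lemma poch_zero (x : ℝ) : poch x 0 = 1 := by simp [poch]
lemma poch_succ (x : ℝ) (n : ℕ) : poch x (n + 1) = poch x n * (x + n) := by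
  simp [poch, ascPochhammer_succ_eval]
lemma poch_one (x : ℝ) : poch x 1 = x := by simp [poch]
lemma poch_succ_left (x : ℝ) (n : ℕ) : poch x (n + 1) = x * poch (x + 1) n := by
  simp [poch, ascPochhammer_succ_left, Polynomial.eval_comp]
lemma poch_add (x : ℝ) (n m : ℕ) : poch x (n + m) = poch x n * poch (x + n) m := by
  rw [poch, ← ascPochhammer_mul]; simp [poch, Polynomial.eval_comp]
lemma poch_pos {x : ℝ} (hx : 0 < x) (n : ℕ) : 0 < poch x n := ascPochhammer_pos n x hx
lemma poch_neg_nat {k n : ℕ} (h : k < n) : poch (-(k : ℝ)) n = 0 :=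
  ascPochhammer_eval_neg_coe_nat_of_lt h
lemma poch_nat (a m : ℕ) : (a.factorial : ℝ) * poch ((a : ℝ) + 1) m = ((a + m).factorial : ℝ) := by
  have h1 : ((a : ℝ) + 1) = ((a + 1 : ℕ) : ℝ) := by push_cast; ring
  rw [h1, poch, ← ascPochhammer_eval_cast, ascPochhammer_nat_eq_ascFactorial]
  rw [← Nat.cast_mul, Nat.factorial_mul_ascFactorial]

/-- coefficient of `x^a` in `π_n^{(β)}` -/
noncomputable def Dc (β : ℝ) (n a : ℕ) : ℝ :=
  (-1 : ℝ) ^ (n - a) * poch ((n : ℝ) - a + 1) a * poch ((a : ℝ) + 1 + β) (n - a) /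
    (a.factorial : ℝ)

lemma Dc_zero {β : ℝ} {n a : ℕ} (h : n < a) : Dc β n a = 0 := by
  obtain ⟨m, rfl⟩ : ∃ m, a = n + m + 1 := ⟨a - n - 1, by omega⟩
  have h0 : ((n : ℝ) - (n + m + 1 : ℕ) + 1) = -((m : ℕ) : ℝ) := by push_cast; ring
  have h2 : m < n + m + 1 := by omega
  rw [Dc, h0, poch_neg_nat h2]
  ring

lemma Dc_diag (β : ℝ) (n : ℕ) : Dc β n n = 1 := by
  rw [Dc, Nat.sub_self]
  have h := poch_nat 0 n
  rw [show (((0:ℕ) : ℝ) + 1) = ((0:ℝ) + 1) by norm_num] at h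
  simp only [Nat.factorial_zero, Nat.cast_one, one_mul, Nat.zero_add] at h
  rw [show ((n:ℝ) - n + 1) = ((0:ℝ) + 1) by ring, h, poch_zero]
  have hne : (n.factorial : ℝ) ≠ 0 := Nat.cast_ne_zero.mpr (Nat.factorial_ne_zero n)
  field_simp

lemma Dc_rec0 (β : ℝ) (n : ℕ) : Dc β (n + 1) 0 = -((n : ℝ) + β + 1) * Dc β n 0 := by
  simp only [Dc, Nat.sub_zero, Nat.factorial_zero, Nat.cast_one, poch_zero]
  rw [poch_succ]
  push_cast
  ring

lemma Dc_rec (β : ℝ) (n s : ℕ) :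
    Dc β (n + 1) (s + 1) = Dc (β + 1) n s - ((n : ℝ) + β + 1) * Dc β n (s + 1) := by
  rcases le_or_gt s n with hs | hs
  · rcases Nat.eq_or_lt_of_le hs with rfl | hs'
    · -- s = n
      rw [Dc_diag, Dc_diag, Dc_zero (by omega)]
      ring
    · -- s < n : write n = s + t + 1
      obtain ⟨t, rfl⟩ : ∃ t, n = s + t + 1 := ⟨n - s - 1, by omega⟩
      have e1 : (s + t + 1 + 1) - (s + 1) = t + 1 := by omega
      have e2 : (s + t + 1) - s = t + 1 := by omega
      have e3 : (s + t + 1) - (s + 1) = t := by omega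
      simp only [Dc, e1, e2, e3]
      have c1 : ((s + t + 1 + 1 : ℕ) : ℝ) - (s + 1 : ℕ) + 1 = (t : ℝ) + 1 + 1 := by push_cast; ring
      have c2 : ((s + t + 1 : ℕ) : ℝ) - (s : ℕ) + 1 = (t : ℝ) + 1 + 1 := by push_cast; ring
      have c3 : ((s + t + 1 : ℕ) : ℝ) - (s + 1 : ℕ) + 1 = (t : ℝ) + 1 := by push_cast; ring
      have c4 : ((s + 1 : ℕ) : ℝ) + 1 + β = ((s : ℕ) : ℝ) + 1 + (β + 1) := by push_cast; ring
      rw [c1, c2, c3, c4]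
      have p1 : poch ((s : ℝ) + 1 + (β + 1)) (t + 1)
          = poch ((s : ℝ) + 1 + (β + 1)) t * ((s : ℝ) + β + 2 + t) := by
        rw [poch_succ]; ring_nf
      have p2 : poch ((t : ℝ) + 1 + 1) (s + 1) = poch ((t : ℝ) + 1 + 1) s * ((t : ℝ) + 2 + s) := by
        rw [poch_succ]; ring_nf
      have p3 : poch ((t : ℝ) + 1) (s + 1) = ((t : ℝ) + 1) * poch ((t : ℝ) + 1 + 1) s := by
        rw [poch_succ_left]
      rw [p1, p2, p3]
      have hf : ((s + 1).factorial : ℝ) = ((s : ℝ) + 1) * (s.factorial : ℝ) := by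
        rw [Nat.factorial_succ]; push_cast; ring
      rw [hf]
      have hfs : (s.factorial : ℝ) ≠ 0 := Nat.cast_ne_zero.mpr (Nat.factorial_ne_zero s)
      have hs1 : ((s : ℝ) + 1) ≠ 0 := by positivity
      field_simp
      push_cast
      ring
  · -- n < s : all three vanish
    rw [Dc_zero (by omega), Dc_zero (by omega), Dc_zero (by omega)]
    ring

lemma Ksum (n : ℕ) : ∀ (β : ℝ) (b : ℕ),
    ∑ a ∈ range (n + 1), Dc β n a * poch (β + 1) (b + a)
      = poch ((b : ℝ) - n + 1) n * poch (β + 1) b := by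
  induction n with
  | zero =>
    intro β b
    simp [Dc_diag, poch_zero]
  | succ n ih =>
    intro β b
    rw [Finset.sum_range_succ' (fun a => Dc β (n + 1) a * poch (β + 1) (b + a)) (n + 1)]
    have step : ∀ s ∈ range (n + 1),
        Dc β (n + 1) (s + 1) * poch (β + 1) (b + (s + 1))
          = Dc (β + 1) n s * ((β + 1) * poch (β + 1 + 1) (b + s))
            - ((n : ℝ) + β + 1) * (Dc β n (s + 1) * poch (β + 1) (b + (s + 1))) := by
      intro s _
      rw [Dc_rec]
      have : b + (s + 1) = (b + s) + 1 := by omega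
      rw [this, poch_succ_left]
      ring
    rw [Finset.sum_congr rfl step, Finset.sum_sub_distrib]
    have h1 : ∑ s ∈ range (n + 1), Dc (β + 1) n s * ((β + 1) * poch (β + 1 + 1) (b + s))
        = (β + 1) * (poch ((b : ℝ) - n + 1) n * poch (β + 1 + 1) b) := by
      rw [← ih (β + 1) b, Finset.mul_sum]
      exact Finset.sum_congr rfl fun s _ => by ring
    have h2 : ∑ s ∈ range (n + 1), ((n : ℝ) + β + 1) * (Dc β n (s + 1) * poch (β + 1) (b + (s + 1)))
        = ((n : ℝ) + β + 1) * (poch ((b : ℝ) - n + 1) n * poch (β + 1) b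
            - Dc β n 0 * poch (β + 1) b) := by
      rw [← Finset.mul_sum]
      congr 1
      have := Finset.sum_range_succ' (fun a => Dc β n a * poch (β + 1) (b + a)) (n + 1)
      rw [Finset.sum_range_succ (fun a => Dc β n a * poch (β + 1) (b + a)) (n + 1),
        Dc_zero (Nat.lt_succ_self n)] at this
      simp only [zero_mul, add_zero, Nat.add_zero] at this
      have h3 := ih β b
      rw [h3] at this
      -- this : poch ((b:ℝ) - n + 1) n * poch (β+1) b
      --   = (∑ s in range (n+1), Dc β n (s+1) * poch (β+1) (b+(s+1))) + Dc β n 0 * poch (β+1) b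
      linarith [this]
    rw [h1, h2, Dc_rec0]
    have hp1 : (β + 1) * poch (β + 1 + 1) b = poch (β + 1) b * (β + 1 + b) := by
      rw [← poch_succ_left, poch_succ]
    have hp2 : poch ((b : ℝ) - (n + 1 : ℕ) + 1) (n + 1)
        = ((b : ℝ) - n - 1 + 1) * poch ((b : ℝ) - n + 1) n := by
      have : ((b : ℝ) - (n + 1 : ℕ) + 1) = (b : ℝ) - n - 1 + 1 - 1 + 1 := by push_cast; ring
      rw [this, poch_succ_left]
      ring_nf
    rw [hp2]
    simp only [Nat.add_zero]
    linear_combination poch ((b : ℝ) - n + 1) n * hp1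


lemma lm_eq (α : ℝ) (n : ℕ) (x : ℝ) :
    laguerreMonic α n x = ∑ a ∈ range (n + 1), Dc α n a * x ^ a := by
  unfold laguerreMonic Dc
  exact Finset.sum_congr rfl fun a _ => by ring

lemma integral_lm (α : ℝ) (hα : -1 < α) (ℓ n : ℕ) :
    ∫ x in Set.Ioi (0 : ℝ), x ^ ((ℓ : ℝ) + α) * Real.exp (-x) * (laguerreMonic α n x) ^ 2
      = ∑ j ∈ range (n + 1), ∑ k ∈ range (n + 1),
          Dc α n j * Dc α n k * Real.Gamma (α + 1 + ((ℓ + j + k : ℕ) : ℝ)) := by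
  have hpos : ∀ j k : ℕ, (0 : ℝ) < α + 1 + ((ℓ + j + k : ℕ) : ℝ) := by
    intro j k
    have : (0 : ℝ) ≤ ((ℓ + j + k : ℕ) : ℝ) := Nat.cast_nonneg _
    linarith
  have hcong : ∀ x ∈ Set.Ioi (0 : ℝ),
      x ^ ((ℓ : ℝ) + α) * Real.exp (-x) * (laguerreMonic α n x) ^ 2
        = ∑ j ∈ range (n + 1), ∑ k ∈ range (n + 1),
            Dc α n j * Dc α n k *
              (Real.exp (-x) * x ^ (α + 1 + ((ℓ + j + k : ℕ) : ℝ) - 1)) := by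
    intro x hx
    rw [Set.mem_Ioi] at hx
    rw [lm_eq, sq, Finset.sum_mul_sum, Finset.mul_sum]
    refine Finset.sum_congr rfl fun j _ => ?_
    rw [Finset.mul_sum]
    refine Finset.sum_congr rfl fun k _ => ?_
    have e1 : (x : ℝ) ^ (α + 1 + ((ℓ + j + k : ℕ) : ℝ) - 1)
        = x ^ ((ℓ : ℝ) + α) * x ^ (j : ℕ) * x ^ (k : ℕ) := by
      rw [← Real.rpow_natCast x j, ← Real.rpow_natCast x k, ← Real.rpow_add hx,
        ← Real.rpow_add hx]
      congr 1
      push_cast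
      ring
    rw [e1]
    ring
  rw [setIntegral_congr_fun measurableSet_Ioi hcong]
  have hint : ∀ j k : ℕ, IntegrableOn
      (fun x => Dc α n j * Dc α n k * (Real.exp (-x) * x ^ (α + 1 + ((ℓ + j + k : ℕ) : ℝ) - 1)))
      (Set.Ioi (0 : ℝ)) := by
    intro j k
    exact (Real.GammaIntegral_convergent (hpos j k)).const_mul _
  rw [integral_finset_sum _ (fun j _ => integrable_finset_sum _ (fun k _ => hint j k))]
  refine Finset.sum_congr rfl fun j _ => ?_
  rw [integral_finset_sum _ (fun k _ => hint j k)]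
  refine Finset.sum_congr rfl fun k _ => ?_
  rw [integral_const_mul, Real.Gamma_eq_integral (hpos j k)]

noncomputable def Tn (α : ℝ) (ℓ n : ℕ) : ℝ :=
  ∑ i ∈ range (ℓ + 1),
    (-1 : ℝ) ^ i * poch ((n : ℝ) - i + 1) ℓ * poch ((n : ℝ) + α - i + 1) ℓ /
      ((i.factorial : ℝ) * ((ℓ - i).factorial : ℝ))

lemma factkey (i k u : ℕ) :
    poch ((i : ℝ) + 1) k * poch ((u : ℝ) + 1) (i + k) * ((i.factorial : ℝ) * (u.factorial : ℝ))
      = ((i + k).factorial : ℝ) * poch ((k : ℝ) + 1) (i + u) * (k.factorial : ℝ) := by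
  have e1 := poch_nat i k
  have e2 := poch_nat u (i + k)
  have e3 := poch_nat k (i + u)
  have h1 : u + (i + k) = k + (i + u) := by omega
  calc poch ((i : ℝ) + 1) k * poch ((u : ℝ) + 1) (i + k) *
        ((i.factorial : ℝ) * (u.factorial : ℝ))
      = ((i.factorial : ℝ) * poch ((i : ℝ) + 1) k) *
        ((u.factorial : ℝ) * poch ((u : ℝ) + 1) (i + k)) := by ring
    _ = ((i + k).factorial : ℝ) * ((u + (i + k)).factorial : ℝ) := by rw [e1, e2]
    _ = ((i + k).factorial : ℝ) * ((k + (i + u)).factorial : ℝ) := by rw [h1]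
    _ = ((i + k).factorial : ℝ) * ((k.factorial : ℝ) * poch ((k : ℝ) + 1) (i + u)) := by rw [e3]
    _ = _ := by ring

lemma cast_neg_sub (p q : ℕ) (h : q < p) :
    (q : ℝ) - (p : ℝ) + 1 = -(((p - q - 1 : ℕ)) : ℝ) := by
  obtain ⟨m, rfl⟩ : ∃ m, p = q + m + 1 := ⟨p - q - 1, by omega⟩
  rw [show q + m + 1 - q - 1 = m by omega]
  push_cast; ring

lemma Sk_eq (α : ℝ) (ℓ n : ℕ) :
    ∑ k ∈ range (n + 1),
        Dc α n k * (poch (((ℓ + k : ℕ) : ℝ) - n + 1) n * poch (α + 1) (ℓ + k))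
      = (n.factorial : ℝ) * poch (α + 1) n * Tn α ℓ n := by
  set t : ℕ → ℝ := fun k =>
    Dc α n k * (poch (((ℓ + k : ℕ) : ℝ) - n + 1) n * poch (α + 1) (ℓ + k)) with ht
  set g : ℕ → ℝ := fun i => if i ≤ ℓ then
      (n.factorial : ℝ) * poch (α + 1) n *
        ((-1 : ℝ) ^ i * poch ((n : ℝ) - i + 1) ℓ * poch ((n : ℝ) + α - i + 1) ℓ /
          ((i.factorial : ℝ) * ((ℓ - i).factorial : ℝ)))
    else 0 with hg
  have step1 : ∑ k ∈ range (n + 1), t k = ∑ i ∈ range (n + 1), t (n - i) := by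
    rw [← Finset.sum_range_reflect]
    exact Finset.sum_congr rfl fun i _ => by simp only [Nat.add_sub_cancel]
  have step2 : ∀ i ∈ range (n + 1), t (n - i) = g i := by
    intro i hi
    rw [Finset.mem_range] at hi
    obtain ⟨k, rfl⟩ : ∃ k, n = i + k := ⟨n - i, by omega⟩
    have hik : i + k - i = k := by omega
    rcases le_or_gt i ℓ with hil | hil
    · -- main case
      obtain ⟨u, rfl⟩ : ∃ u, ℓ = i + u := ⟨ℓ - i, by omega⟩
      simp only [hg, if_pos hil]
      rw [ht]
      simp only [hik]
      have hki : i + k - k = i := by omega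
      rw [Dc]
      simp only [hki]
      -- rewrite the three poch arguments
      have a1 : ((i + k : ℕ) : ℝ) - (k : ℕ) + 1 = (i : ℝ) + 1 := by push_cast; ring
      have a2 : (((i + u) + k : ℕ) : ℝ) - ((i + k : ℕ) : ℝ) + 1 = (u : ℝ) + 1 := by
        push_cast; ring
      have a3 : ((i + k : ℕ) : ℝ) - (i : ℕ) + 1 = (k : ℝ) + 1 := by push_cast; ring
      have a4 : ((i + k : ℕ) : ℝ) + α - (i : ℕ) + 1 = α + 1 + (k : ℕ) := by push_cast; ring
      have a5 : ((k : ℕ) : ℝ) + 1 + α = α + 1 + (k : ℕ) := by push_cast; ring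
      rw [a1, a2, a3, a4, a5]
      -- split poch (α+1) (ℓ+k) = poch (α+1) k * poch (α+1+k) ℓ
      have s1 : poch (α + 1) ((i + u) + k) = poch (α + 1) k * poch (α + 1 + (k : ℕ)) (i + u) := by
        rw [show (i + u) + k = k + (i + u) by omega, poch_add]
      -- poch (α+1) k * poch (α+1+k) i = poch (α+1) (i+k)
      have s2 : poch (α + 1) (i + k) = poch (α + 1) k * poch (α + 1 + (k : ℕ)) i := by
        rw [show i + k = k + i by omega, poch_add]
      rw [s1, s2]
      have key := factkey i k u
      have hfi : (i.factorial : ℝ) ≠ 0 := Nat.cast_ne_zero.mpr (Nat.factorial_ne_zero i)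
      have hfu : (u.factorial : ℝ) ≠ 0 := Nat.cast_ne_zero.mpr (Nat.factorial_ne_zero u)
      have hfk : (k.factorial : ℝ) ≠ 0 := Nat.cast_ne_zero.mpr (Nat.factorial_ne_zero k)
      rw [show i + u - i = u by omega]
      field_simp
      linear_combination
        poch (α + 1 + (k : ℕ)) i * poch (α + 1) k *
          poch (α + 1 + (k : ℕ)) (i + u) * key
    · -- vanishing case : ℓ < i ≤ i + k
      simp only [hg, if_neg (show ¬ i ≤ ℓ by omega)]
      simp only [ht, hik]
      have a0 := cast_neg_sub (i + k) (ℓ + k) (by omega)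
      rw [show i + k - (ℓ + k) - 1 = i - ℓ - 1 by omega] at a0
      rw [a0, poch_neg_nat (show i - ℓ - 1 < i + k by omega)]
      ring
  have step3 : ∑ i ∈ range (n + 1), g i = ∑ i ∈ range (ℓ + 1), g i := by
    have z1 : ∀ i ∈ range (n + ℓ + 1), i ∉ range (n + 1) → g i = 0 := by
      intro i hi hni
      rw [Finset.mem_range] at hi
      rw [Finset.mem_range, not_lt] at hni
      rcases le_or_gt i ℓ with hil | hil
      · simp only [hg, if_pos hil]
        have a0 := cast_neg_sub i n (by omega)
        rw [a0, poch_neg_nat (show i - n - 1 < ℓ by omega)]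
        ring
      · simp only [hg, if_neg (show ¬ i ≤ ℓ by omega)]
    have z2 : ∀ i ∈ range (n + ℓ + 1), i ∉ range (ℓ + 1) → g i = 0 := by
      intro i _ hni
      rw [Finset.mem_range, not_lt] at hni
      simp only [hg, if_neg (show ¬ i ≤ ℓ by omega)]
    rw [Finset.sum_subset (Finset.range_subset_range.mpr (by omega)) z1,
      ← Finset.sum_subset (Finset.range_subset_range.mpr (by omega)) z2]
  have step4 : ∑ i ∈ range (ℓ + 1), g i = (n.factorial : ℝ) * poch (α + 1) n * Tn α ℓ n := by
    rw [Tn, Finset.mul_sum]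
    refine Finset.sum_congr rfl fun i hi => ?_
    rw [Finset.mem_range] at hi
    simp only [hg, if_pos (show i ≤ ℓ by omega)]
  rw [step1, Finset.sum_congr rfl step2, step3, step4]

lemma A_succ (N M : ℝ) (L : ℕ) :
    A N M (L + 1) = (1 / ((L : ℝ) + 1)) * ∑ j ∈ range (L + 1),
      (-1 : ℝ) ^ j * poch (N - j) (L + 1) * poch (M - j) (L + 1) /
        ((j.factorial : ℝ) * ((L - j).factorial : ℝ)) := rfl

lemma coefkey (L j : ℕ) (hj : j < L + 2) (w : ℝ) :
    (if j ≤ L then w / ((j.factorial : ℝ) * ((L - j).factorial : ℝ)) else 0)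
      + (if 1 ≤ j then w / (((j - 1).factorial : ℝ) * ((L - (j - 1)).factorial : ℝ)) else 0)
    = ((L : ℝ) + 1) * w / ((j.factorial : ℝ) * ((L + 1 - j).factorial : ℝ)) := by
  rcases j with _ | s
  · rw [if_pos (Nat.zero_le L), if_neg (show ¬ (1 : ℕ) ≤ 0 by omega)]
    simp only [Nat.sub_zero, Nat.factorial_zero, Nat.cast_one, one_mul, add_zero,
      Nat.factorial_succ]
    have h1 : ((L).factorial : ℝ) ≠ 0 := Nat.cast_ne_zero.mpr (Nat.factorial_ne_zero _)
    have h2 : ((L : ℝ) + 1) ≠ 0 := by positivity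
    push_cast
    field_simp
  · rw [if_pos (show 1 ≤ s + 1 by omega)]
    rw [show s + 1 - 1 = s by omega]
    rcases le_or_gt (s + 1) L with hs | hs
    · obtain ⟨t, rfl⟩ : ∃ t, L = s + t + 1 := ⟨L - s - 1, by omega⟩
      rw [if_pos hs]
      rw [show s + t + 1 - (s + 1) = t by omega, show s + t + 1 - s = t + 1 by omega,
        show s + t + 1 + 1 - (s + 1) = t + 1 by omega]
      rw [Nat.factorial_succ (s), Nat.factorial_succ (t)]
      have h1 : ((s).factorial : ℝ) ≠ 0 := Nat.cast_ne_zero.mpr (Nat.factorial_ne_zero _)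
      have h2 : ((t).factorial : ℝ) ≠ 0 := Nat.cast_ne_zero.mpr (Nat.factorial_ne_zero _)
      have h3 : ((s : ℝ) + 1) ≠ 0 := by positivity
      have h4 : ((t : ℝ) + 1) ≠ 0 := by positivity
      push_cast
      field_simp
      ring
    · have hsL : s = L := by omega
      subst hsL
      rw [if_neg (show ¬ s + 1 ≤ s by omega)]
      rw [show s + 1 - (s + 1) = 0 by omega, show s - s = 0 by omega]
      rw [Nat.factorial_succ s]
      simp only [Nat.factorial_zero, Nat.cast_one, mul_one, zero_add]
      have h1 : ((s).factorial : ℝ) ≠ 0 := Nat.cast_ne_zero.mpr (Nat.factorial_ne_zero _)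
      have h3 : ((s : ℝ) + 1) ≠ 0 := by positivity
      push_cast
      field_simp

lemma Akey (α : ℝ) (L n : ℕ) :
    A ((n : ℝ) + 1) ((n : ℝ) + 1 + α) (L + 1)
      = A (n : ℝ) ((n : ℝ) + α) (L + 1) + Tn α (L + 1) n := by
  set w : ℕ → ℝ := fun j =>
    (-1 : ℝ) ^ j * poch ((n : ℝ) - j + 1) (L + 1) * poch ((n : ℝ) + α - j + 1) (L + 1) with hw
  have hA1 : A ((n : ℝ) + 1) ((n : ℝ) + 1 + α) (L + 1)
      = (1 / ((L : ℝ) + 1)) *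
          ∑ j ∈ range (L + 1), w j / ((j.factorial : ℝ) * ((L - j).factorial : ℝ)) := by
    rw [A_succ]
    congr 1
    refine Finset.sum_congr rfl fun j _ => ?_
    simp only [hw]
    rw [show (n : ℝ) + 1 - j = (n : ℝ) - j + 1 by ring,
      show (n : ℝ) + 1 + α - j = (n : ℝ) + α - j + 1 by ring]
  have hA0 : A (n : ℝ) ((n : ℝ) + α) (L + 1)
      = (1 / ((L : ℝ) + 1)) *
          ∑ j ∈ range (L + 1), -(w (j + 1) / ((j.factorial : ℝ) * ((L - j).factorial : ℝ))) := by
    rw [A_succ]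
    congr 1
    refine Finset.sum_congr rfl fun j _ => ?_
    simp only [hw]
    rw [show (n : ℝ) - ((j + 1 : ℕ) : ℝ) + 1 = (n : ℝ) - j by push_cast; ring,
      show (n : ℝ) + α - ((j + 1 : ℕ) : ℝ) + 1 = (n : ℝ) + α - j by push_cast; ring,
      pow_succ]
    ring
  have hTn : Tn α (L + 1) n
      = ∑ j ∈ range (L + 2), w j / ((j.factorial : ℝ) * ((L + 1 - j).factorial : ℝ)) := rfl
  have e1 : ∑ j ∈ range (L + 2),
        (if j ≤ L then w j / ((j.factorial : ℝ) * ((L - j).factorial : ℝ)) else 0)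
      = ∑ j ∈ range (L + 1), w j / ((j.factorial : ℝ) * ((L - j).factorial : ℝ)) := by
    rw [← Finset.sum_subset (Finset.range_subset_range.mpr (show L + 1 ≤ L + 2 by omega))
      (fun j _ hjn => by
        rw [Finset.mem_range, not_lt] at hjn
        exact if_neg (by omega))]
    exact Finset.sum_congr rfl fun j hj =>
      if_pos (by rw [Finset.mem_range] at hj; omega)
  have e2 : ∑ j ∈ range (L + 2),
        (if 1 ≤ j then w j / (((j - 1).factorial : ℝ) * ((L - (j - 1)).factorial : ℝ)) else 0)
      = ∑ j ∈ range (L + 1), w (j + 1) / ((j.factorial : ℝ) * ((L - j).factorial : ℝ)) := by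
    rw [Finset.sum_range_succ' (fun j =>
      if 1 ≤ j then w j / (((j - 1).factorial : ℝ) * ((L - (j - 1)).factorial : ℝ)) else 0) (L + 1)]
    rw [if_neg (show ¬ (1 : ℕ) ≤ 0 by omega), add_zero]
    refine Finset.sum_congr rfl fun j _ => ?_
    rw [if_pos (show 1 ≤ j + 1 by omega), show j + 1 - 1 = j by omega]
  have MSI : ∑ j ∈ range (L + 1), w j / ((j.factorial : ℝ) * ((L - j).factorial : ℝ))
      + ∑ j ∈ range (L + 1), w (j + 1) / ((j.factorial : ℝ) * ((L - j).factorial : ℝ))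
      = ((L : ℝ) + 1) * ∑ j ∈ range (L + 2), w j /
          ((j.factorial : ℝ) * ((L + 1 - j).factorial : ℝ)) := by
    rw [← e1, ← e2, ← Finset.sum_add_distrib, Finset.mul_sum]
    refine Finset.sum_congr rfl fun j hj => ?_
    rw [Finset.mem_range] at hj
    rw [coefkey L j hj (w j)]
    ring
  rw [hA1, hA0]
  have hL : ((L : ℝ) + 1) ≠ 0 := by positivity
  have hgoal : ∑ j ∈ range (L + 2), w j / ((j.factorial : ℝ) * ((L + 1 - j).factorial : ℝ))
      = (1 / ((L : ℝ) + 1)) * (((L : ℝ) + 1) * ∑ j ∈ range (L + 2), w j /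
          ((j.factorial : ℝ) * ((L + 1 - j).factorial : ℝ))) := by
    field_simp
  rw [Finset.sum_neg_distrib, hTn, hgoal, ← MSI]
  ring

lemma tele (α : ℝ) (L : ℕ) (N : ℕ) :
    ∑ n ∈ range N, Tn α (L + 1) n = A (N : ℝ) ((N : ℝ) + α) (L + 1) := by
  induction N with
  | zero =>
    simp only [Finset.range_zero, Finset.sum_empty, Nat.cast_zero]
    rw [A_succ]
    rw [Finset.sum_eq_zero (fun j hj => by
      rw [Finset.mem_range] at hj
      rw [show (0 : ℝ) - (j : ℝ) = -(j : ℝ) by ring, poch_neg_nat hj]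
      ring)]
    ring
  | succ n ih =>
    rw [Finset.sum_range_succ, ih,
      show ((n + 1 : ℕ) : ℝ) = (n : ℝ) + 1 by push_cast; ring, Akey]

lemma Gamma_poch (x : ℝ) (hx : 0 < x) (m : ℕ) :
    Real.Gamma (x + m) = poch x m * Real.Gamma x := by
  induction m with
  | zero => simp [poch_zero]
  | succ m ih =>
    have h1 : x + ((m + 1 : ℕ) : ℝ) = (x + m) + 1 := by push_cast; ring
    have h2 : x + (m : ℝ) ≠ 0 := by positivity
    rw [h1, Real.Gamma_add_one h2, ih, poch_succ]
    ring

/-- LUE one-point correlator: `⟨tr X^ℓ⟩ = A_ℓ(N, N+α)`, written in terms of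
monic generalized Laguerre polynomials. -/
theorem LUE_one_point_correlator (α : ℝ) (hα : -1 < α) (N : ℕ) (hN : 0 < N)
    (ℓ : ℕ) (hℓ : 1 ≤ ℓ) :
    ∑ n ∈ range N,
      (1 / ((n.factorial : ℝ) * Real.Gamma (α + n + 1))) *
        ∫ x in Set.Ioi (0 : ℝ),
          x ^ ((ℓ : ℝ) + α) * Real.exp (-x) * (laguerreMonic α n x) ^ 2
    = A (N : ℝ) ((N : ℝ) + α) ℓ := by
  obtain ⟨L, rfl⟩ : ∃ L, ℓ = L + 1 := ⟨ℓ - 1, by omega⟩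
  have hα1 : (0 : ℝ) < α + 1 := by linarith
  have per_n : ∀ n : ℕ,
      (1 / ((n.factorial : ℝ) * Real.Gamma (α + n + 1))) *
        ∫ x in Set.Ioi (0 : ℝ),
          x ^ (((L + 1 : ℕ) : ℝ) + α) * Real.exp (-x) * (laguerreMonic α n x) ^ 2
      = Tn α (L + 1) n := by
    intro n
    rw [integral_lm α hα (L + 1) n]
    have hsum : ∑ j ∈ range (n + 1), ∑ k ∈ range (n + 1),
        Dc α n j * Dc α n k * Real.Gamma (α + 1 + (((L + 1) + j + k : ℕ) : ℝ))
        = Real.Gamma (α + 1) * ((n.factorial : ℝ) * poch (α + 1) n * Tn α (L + 1) n) := by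
      have h1 : ∀ j k : ℕ,
          Dc α n j * Dc α n k * Real.Gamma (α + 1 + (((L + 1) + j + k : ℕ) : ℝ))
          = Real.Gamma (α + 1) * (Dc α n k * (Dc α n j * poch (α + 1) (((L + 1) + k) + j))) := by
        intro j k
        rw [Gamma_poch (α + 1) hα1 ((L + 1) + j + k),
          show (L + 1) + j + k = ((L + 1) + k) + j by omega]
        ring
      calc ∑ j ∈ range (n + 1), ∑ k ∈ range (n + 1),
            Dc α n j * Dc α n k * Real.Gamma (α + 1 + (((L + 1) + j + k : ℕ) : ℝ))
          = Real.Gamma (α + 1) * ∑ k ∈ range (n + 1), Dc α n k *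
              ∑ j ∈ range (n + 1), Dc α n j * poch (α + 1) (((L + 1) + k) + j) := by
            rw [Finset.sum_comm, Finset.mul_sum]
            refine Finset.sum_congr rfl fun k _ => ?_
            rw [Finset.mul_sum, Finset.mul_sum]
            exact Finset.sum_congr rfl fun j _ => h1 j k
        _ = Real.Gamma (α + 1) * ∑ k ∈ range (n + 1), Dc α n k *
              (poch ((((L + 1) + k : ℕ) : ℝ) - n + 1) n * poch (α + 1) ((L + 1) + k)) := by
            congr 1
            exact Finset.sum_congr rfl fun k _ => by rw [Ksum n α ((L + 1) + k)]
        _ = Real.Gamma (α + 1) * ((n.factorial : ℝ) * poch (α + 1) n * Tn α (L + 1) n) := by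
            rw [Sk_eq α (L + 1) n]
    rw [hsum]
    have hGn : Real.Gamma (α + (n : ℝ) + 1) = poch (α + 1) n * Real.Gamma (α + 1) := by
      rw [show α + (n : ℝ) + 1 = (α + 1) + (n : ℕ) by push_cast; ring,
        Gamma_poch (α + 1) hα1 n]
    rw [hGn]
    have hG : Real.Gamma (α + 1) ≠ 0 := (Real.Gamma_pos_of_pos hα1).ne'
    have hp : poch (α + 1) n ≠ 0 := (poch_pos hα1 n).ne'
    have hf : ((n.factorial : ℝ)) ≠ 0 := Nat.cast_ne_zero.mpr (Nat.factorial_ne_zero n)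
    field_simp
  rw [Finset.sum_congr rfl fun n _ => per_n n]
  exact tele α L N
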